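/- Let X be a regular curve and A a finite set of separating points of finite order (points a such that X \ {a} has only finitely many connected components). Then X \ A has only finitely many connected components. -/
import Mathlib

open Set Metric Topology

/-- A compact connected metric space satisfying the regularity condition
(neighborhood basis of open sets with finite frontier) is locally connected. -/
theorem regular_locallyConnected {X : Type*} [MetricSpace X] [CompactSpace X]
    [ConnectedSpace X]
    (hreg : ∀ x : X, ∀ ε > (0 : ℝ), ∃ U : Set X,
      IsOpen U ∧ x ∈ U ∧ U ⊆ Metric.ball x ε ∧ (frontier U).Finite) :
    LocallyConnectedSpace X := by
  rw [locallyConnectedSpace_iff_connected_subsets]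
  intro x N hN
  obtain ⟨ε, hε, hball⟩ := Metric.nhds_basis_closedBall.mem_iff.mp hN
  obtain ⟨U, hUo, hxU, hUb, hUf⟩ := hreg x ε hε
  set K := closure U with hK
  have hKN : K ⊆ N := by
    calc K ⊆ closure (ball x ε) := closure_mono hUb
    _ ⊆ closedBall x ε := Metric.closure_ball_subset_closedBall
    _ ⊆ N := hball
  by_cases huniv : K = univ
  · exact ⟨univ, Filter.univ_mem, isPreconnected_univ, huniv ▸ hKN⟩
  have hKc : IsClosed K := isClosed_closure
  haveI hKcompact : CompactSpace K := isCompact_iff_compactSpace.mp hKc.isCompact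
  have hUK : U ⊆ K := subset_closure
  have hKFU : ∀ y ∈ K, y ∉ frontier U → y ∈ U := by
    intro y hyK hyF
    by_contra h
    exact hyF (by rw [hUo.frontier_eq]; exact ⟨hyK, h⟩)
  have hF' : (Subtype.val ⁻¹' (frontier U) : Set K).Finite :=
    hUf.preimage Subtype.val_injective.injOn
  -- Claim A: every connected component of K contains a frontier point of U.
  have claimA : ∀ z : K, ∃ f : K, (f : X) ∈ frontier U ∧ f ∈ connectedComponent z := by
    intro z
    by_contra hcon
    push_neg at hcon
    have hZ : ∀ f : K, (f : X) ∈ frontier U → ∃ Z : Set K, IsClopen Z ∧ z ∈ Z ∧ f ∉ Z := by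
      intro f hf
      have hfz := hcon f hf
      rw [connectedComponent_eq_iInter_isClopen] at hfz
      simp only [mem_iInter, not_forall] at hfz
      obtain ⟨⟨Z, hZ1, hZ2⟩, hfZ⟩ := hfz
      exact ⟨Z, hZ1, hZ2, hfZ⟩
    choose Z hZc hzZ hfZ using hZ
    classical
    set Z' : K → Set K := fun f => if h : (f : X) ∈ frontier U then Z f h else univ with hZ'def
    set L : Set K := ⋂ f ∈ (Subtype.val ⁻¹' (frontier U) : Set K), Z' f with hLdef
    have hLclopen : IsClopen L := hF'.isClopen_biInter (fun f hf => by
      simp only [hZ'def]; rw [dif_pos (show (f : X) ∈ frontier U from hf)]; exact hZc f hf)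
    have hzL : z ∈ L := mem_iInter₂.mpr (fun f hf => by
      simp only [hZ'def]; rw [dif_pos (show (f : X) ∈ frontier U from hf)]; exact hzZ f hf)
    have hLU : ∀ w ∈ L, (w : X) ∈ U := by
      intro w hw
      refine hKFU w w.2 ?_
      intro hwF
      have := mem_iInter₂.mp hw w hwF
      simp only [hZ'def, dif_pos hwF] at this
      exact hfZ w hwF this
    obtain ⟨O, hOopen, hOe⟩ := isOpen_induced_iff.mp hLclopen.isOpen
    have hL0 : Subtype.val '' L = O ∩ U := by
      apply subset_antisymm
      · rintro _ ⟨w, hwL, rfl⟩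
        exact ⟨by rw [← hOe] at hwL; exact hwL, hLU w hwL⟩
      · rintro y ⟨hyO, hyU⟩
        exact ⟨⟨y, hUK hyU⟩, by rw [← hOe]; exact hyO, rfl⟩
    have hclosed : IsClosed (Subtype.val '' L) :=
      (hLclopen.isClosed.isCompact.image continuous_subtype_val).isClosed
    have hclopen : IsClopen (Subtype.val '' L) := ⟨hclosed, hL0 ▸ hOopen.inter hUo⟩
    have hLuniv : Subtype.val '' L = univ := hclopen.eq_univ ⟨z, ⟨z, hzL, rfl⟩⟩
    have hUuniv : U = univ := eq_univ_of_forall (fun y => by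
      have hy : y ∈ Subtype.val '' L := hLuniv ▸ mem_univ y
      obtain ⟨w, hwL, rfl⟩ := hy
      exact hLU w hwL)
    exact huniv (by rw [hK, hUuniv, closure_univ])
  -- the component of x in K
  set x' : K := ⟨x, hUK hxU⟩
  set C := connectedComponent x' with hC
  have hCopen : IsOpen C := by
    rw [← isClosed_compl_iff]
    have hcompl : Cᶜ = ⋃ f ∈ {f ∈ (Subtype.val ⁻¹' (frontier U) : Set K) | f ∉ C},
        connectedComponent f := by
      ext w
      constructor
      · intro hw
        obtain ⟨f, hfF, hfw⟩ := claimA w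
        have heq : connectedComponent w = connectedComponent f := connectedComponent_eq hfw
        have hfC : f ∉ C := by
          intro hfC
          have h2 : connectedComponent x' = connectedComponent f := connectedComponent_eq hfC
          exact hw (show w ∈ C by rw [hC, h2, ← heq]; exact mem_connectedComponent)
        exact mem_biUnion ⟨hfF, hfC⟩ (by rw [← heq]; exact mem_connectedComponent)
      · intro hw
        obtain ⟨f, hf, hwf⟩ := mem_iUnion₂.mp hw
        intro hwC
        have h1 : connectedComponent f = connectedComponent w := connectedComponent_eq hwf
        have h2 : connectedComponent x' = connectedComponent w := connectedComponent_eq hwC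
        exact hf.2 (show f ∈ C by rw [hC, h2, ← h1]; exact mem_connectedComponent)
    rw [hcompl]
    exact (hF'.sep _).isClosed_biUnion (fun f _ => isClosed_connectedComponent)
  obtain ⟨O, hOopen, hOe⟩ := isOpen_induced_iff.mp hCopen
  refine ⟨Subtype.val '' C, ?_,
    isPreconnected_connectedComponent.image _ continuous_subtype_val.continuousOn,
    fun y hy => by obtain ⟨w, _, rfl⟩ := hy; exact hKN w.2⟩
  rw [_root_.mem_nhds_iff]
  refine ⟨O ∩ U, ?_, hOopen.inter hUo, ⟨?_, hxU⟩⟩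
  · rintro y ⟨hyO, hyU⟩
    exact ⟨⟨y, hUK hyU⟩, by rw [← hOe]; exact hyO, rfl⟩
  · have hx' : x' ∈ C := mem_connectedComponent
    rw [← hOe] at hx'
    exact hx'

/-- in a regular curve, removing a finite set of separating
points of finite order leaves only finitely many connected components. -/
theorem stmt17 {X : Type*} [MetricSpace X] [CompactSpace X] [ConnectedSpace X]
    [Nonempty X]
    (hreg : ∀ x : X, ∀ ε > (0 : ℝ), ∃ U : Set X,
      IsOpen U ∧ x ∈ U ∧ U ⊆ Metric.ball x ε ∧ (frontier U).Finite)
    (A : Set X) (hA : A.Finite)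
    (hfinord : ∀ a ∈ A,
      {C : Set X | ∃ x ∈ ({a}ᶜ : Set X), C = connectedComponentIn {a}ᶜ x}.Finite) :
    {C : Set X | ∃ x ∈ Aᶜ, C = connectedComponentIn Aᶜ x}.Finite := by
  classical
  haveI hLC : LocallyConnectedSpace X := regular_locallyConnected hreg
  have hAc_open : IsOpen (Aᶜ : Set X) := hA.isClosed.isOpen_compl
  rcases A.eq_empty_or_nonempty with rfl | hAne
  · refine (Set.finite_singleton (univ : Set X)).subset ?_
    rintro C ⟨x, _, rfl⟩
    simp [Set.compl_empty, connectedComponentIn_univ,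
      PreconnectedSpace.connectedComponent_eq_univ]
  -- maximality of components w.r.t. closure
  have hmaxcl : ∀ x ∈ (Aᶜ : Set X), ∀ y ∈ closure (connectedComponentIn Aᶜ x),
      y ∈ (Aᶜ : Set X) → y ∈ connectedComponentIn Aᶜ x := by
    intro x hx y hy hyA
    have hpre : IsPreconnected (insert y (connectedComponentIn Aᶜ x)) :=
      isPreconnected_connectedComponentIn.subset_closure (subset_insert _ _)
        (insert_subset hy subset_closure)
    have hsub : insert y (connectedComponentIn Aᶜ x) ⊆ connectedComponentIn Aᶜ x :=
      hpre.subset_connectedComponentIn (mem_insert_iff.mpr (Or.inr (mem_connectedComponentIn hx)))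
        (insert_subset hyA (connectedComponentIn_subset _ _))
    exact hsub (mem_insert y _)
  -- every component has a point of A in its closure
  have hattach : ∀ x ∈ (Aᶜ : Set X), ∃ a ∈ A, a ∈ closure (connectedComponentIn Aᶜ x) := by
    intro x hx
    by_contra h
    push_neg at h
    have hcl : closure (connectedComponentIn Aᶜ x) ⊆ connectedComponentIn Aᶜ x := by
      intro y hy
      have hyA : y ∈ (Aᶜ : Set X) := fun hyA => h y hyA hy
      exact hmaxcl x hx y hy hyA
    have hclopen : IsClopen (connectedComponentIn Aᶜ x) :=
      ⟨isClosed_of_closure_subset hcl, hAc_open.connectedComponentIn⟩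
    have huniv := hclopen.eq_univ ⟨x, mem_connectedComponentIn hx⟩
    obtain ⟨a, ha⟩ := hAne
    exact (connectedComponentIn_subset (Aᶜ : Set X) x) (huniv ▸ mem_univ a) ha
  have hcover : {C : Set X | ∃ x ∈ Aᶜ, C = connectedComponentIn Aᶜ x} ⊆
      ⋃ a ∈ A, {C : Set X | (∃ x ∈ (Aᶜ : Set X), C = connectedComponentIn Aᶜ x) ∧
        a ∈ closure C} := by
    rintro C ⟨x, hx, rfl⟩
    obtain ⟨a, haA, hacl⟩ := hattach x hx
    exact mem_biUnion haA ⟨⟨x, hx, rfl⟩, hacl⟩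
  refine Set.Finite.subset (hA.biUnion ?_) hcover
  intro a haA
  -- choose ε so that the closed ball misses A \ {a}
  have hA' : IsClosed (A \ {a}) := (hA.subset diff_subset).isClosed
  have haA' : a ∈ (A \ {a})ᶜ := fun h => h.2 rfl
  obtain ⟨ε, hε, hballA⟩ := Metric.isOpen_iff.mp hA'.isOpen_compl a haA'
  obtain ⟨V, hVo, haV, hVb, hVf⟩ := hreg a (ε / 2) (by linarith)
  have hclV : closure V ⊆ (A \ {a})ᶜ := by
    calc closure V ⊆ closure (ball a (ε / 2)) := closure_mono hVb
    _ ⊆ closedBall a (ε / 2) := Metric.closure_ball_subset_closedBall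
    _ ⊆ ball a ε := Metric.closedBall_subset_ball (by linarith)
    _ ⊆ (A \ {a})ᶜ := hballA
  refine Set.Finite.subset (((hVf.inter_of_left (Aᶜ : Set X)).image
    (fun y => connectedComponentIn Aᶜ y)).union (hfinord a haA)) ?_
  rintro C ⟨⟨x, hx, rfl⟩, hacl⟩
  by_cases hmeet : (connectedComponentIn Aᶜ x ∩ frontier V).Nonempty
  · left
    obtain ⟨y, hyC, hyF⟩ := hmeet
    exact ⟨y, ⟨hyF, connectedComponentIn_subset _ _ hyC⟩, (connectedComponentIn_eq hyC).symm⟩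
  · right
    rw [Set.not_nonempty_iff_eq_empty] at hmeet
    -- the component is contained in V
    have hCV : connectedComponentIn Aᶜ x ⊆ V := by
      have hxV : (connectedComponentIn Aᶜ x ∩ V).Nonempty := by
        rw [_root_.mem_closure_iff] at hacl
        obtain ⟨y, hyV, hyC⟩ := hacl V hVo haV
        exact ⟨y, hyC, hyV⟩
      by_contra hsub
      obtain ⟨c, hcC, hcV⟩ := not_subset.mp hsub
      have hcvc : c ∈ (closure V)ᶜ := by
        intro hccl
        have : c ∈ frontier V := by rw [hVo.frontier_eq]; exact ⟨hccl, hcV⟩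
        exact absurd (mem_inter hcC this) (by rw [hmeet]; exact notMem_empty c)
      have hcover2 : connectedComponentIn Aᶜ x ⊆ V ∪ (closure V)ᶜ := by
        intro y hy
        by_cases hyV : y ∈ V
        · exact Or.inl hyV
        · right
          intro hycl
          have : y ∈ frontier V := by rw [hVo.frontier_eq]; exact ⟨hycl, hyV⟩
          exact absurd (mem_inter hy this) (by rw [hmeet]; exact notMem_empty y)
      obtain ⟨w, _, hw2, hw3⟩ := isPreconnected_connectedComponentIn V (closure V)ᶜ hVo
        isClosed_closure.isOpen_compl hcover2 hxV ⟨c, hcC, hcvc⟩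
      exact hw3 (subset_closure hw2)
    -- the component of Aᶜ at x equals the component of {a}ᶜ at x
    have hxa : x ∈ ({a}ᶜ : Set X) := fun h => hx (mem_singleton_iff.mp h ▸ haA)
    refine ⟨x, hxa, ?_⟩
    have hDa : connectedComponentIn Aᶜ x ⊆ ({a}ᶜ : Set X) :=
      (connectedComponentIn_subset _ _).trans (compl_subset_compl.mpr (singleton_subset_iff.mpr haA))
    have hDE : connectedComponentIn Aᶜ x ⊆ connectedComponentIn ({a}ᶜ : Set X) x :=
      isPreconnected_connectedComponentIn.subset_connectedComponentIn
        (mem_connectedComponentIn hx) hDa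
    have hclD : closure (connectedComponentIn Aᶜ x) ⊆ insert a (connectedComponentIn Aᶜ x) := by
      intro y hy
      by_cases hyA : y ∈ (Aᶜ : Set X)
      · exact mem_insert_iff.mpr (Or.inr (hmaxcl x hx y hy hyA))
      · have hyclV : y ∈ closure V := closure_mono hCV hy
        have hnd : y ∉ A \ {a} := hclV hyclV
        have hyA2 : y ∈ A := by simpa using hyA
        have hya : y = a := by
          by_contra hne
          exact hnd ⟨hyA2, by simpa using hne⟩
        rw [hya]
        exact mem_insert a _
    have hED : connectedComponentIn ({a}ᶜ : Set X) x ⊆ connectedComponentIn Aᶜ x := by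
      have hopenD : IsOpen (connectedComponentIn Aᶜ x) := hAc_open.connectedComponentIn
      have hcover3 : connectedComponentIn ({a}ᶜ : Set X) x ⊆
          connectedComponentIn Aᶜ x ∪ (closure (connectedComponentIn Aᶜ x))ᶜ := by
        intro y hy
        by_cases hyD : y ∈ connectedComponentIn Aᶜ x
        · exact Or.inl hyD
        · right
          intro hycl
          rcases mem_insert_iff.mp (hclD hycl) with h | h
          · exact (connectedComponentIn_subset ({a}ᶜ : Set X) x hy) (h ▸ rfl)
          · exact hyD h
      by_contra hsub
      obtain ⟨c, hcE, hcD⟩ := not_subset.mp hsub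
      have hcc : c ∈ (closure (connectedComponentIn Aᶜ x))ᶜ := by
        rcases hcover3 hcE with h | h
        · exact absurd h hcD
        · exact h
      obtain ⟨w, _, hw2, hw3⟩ := isPreconnected_connectedComponentIn
        (connectedComponentIn Aᶜ x) (closure (connectedComponentIn Aᶜ x))ᶜ hopenD
        isClosed_closure.isOpen_compl hcover3
        ⟨x, mem_connectedComponentIn hxa, mem_connectedComponentIn hx⟩ ⟨c, hcE, hcc⟩
      exact hw3 (subset_closure hw2)
    exact subset_antisymm hDE hED
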